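/- Let A = ⟨α₀, α∞, {A_σ}⟩ and B = ⟨β₀, β∞, {B_σ}⟩ be weighted finite automata over finite alphabet Σ realizing functions f_A, f_B ∈ ℓ²(Σ*). If the spectral radius of C = ∑_{σ∈Σ} A_σ ⊗ B_σ satisfies ρ(C) < 1, then ∑_{x ∈ Σ*} f_A(x) f_B(x) = (α₀ ⊗ β₀)ᵀ (I − C)^{-1} (α∞ ⊗ β∞). -/

import Mathlib

open Matrix Filter
open scoped Kronecker ENNReal NNReal

section helpers

lemma nnnorm_mapMatrix_aux {N : Type*} [Fintype N] [DecidableEq N] (M : Matrix N N ℝ) :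
    letI : NormedRing (Matrix N N ℝ) := Matrix.linftyOpNormedRing
    letI : NormedRing (Matrix N N ℂ) := Matrix.linftyOpNormedRing
    ‖((algebraMap ℝ ℂ).mapMatrix M : Matrix N N ℂ)‖₊ = ‖M‖₊ := by
  letI : NormedRing (Matrix N N ℝ) := Matrix.linftyOpNormedRing
  letI : NormedRing (Matrix N N ℂ) := Matrix.linftyOpNormedRing
  simp [Matrix.linfty_opNNNorm_def, RingHom.mapMatrix_apply, Matrix.map_apply]

lemma geo_aux {N : Type*} [Fintype N] [DecidableEq N] [Nonempty N] (C : Matrix N N ℝ)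
    (hρ : ∀ μ ∈ spectrum ℂ (C.map (algebraMap ℝ ℂ)), ‖μ‖ < 1) :
    ∃ S : Matrix N N ℝ, (1 - C)⁻¹ = S ∧
      ∀ L : Matrix N N ℝ →ₗ[ℝ] ℝ, HasSum (fun t : ℕ => L (C ^ t)) (L S) := by
  letI : NormedRing (Matrix N N ℝ) := Matrix.linftyOpNormedRing
  letI : NormedAlgebra ℝ (Matrix N N ℝ) := Matrix.linftyOpNormedAlgebra
  letI : NormedRing (Matrix N N ℂ) := Matrix.linftyOpNormedRing
  letI : NormedAlgebra ℂ (Matrix N N ℂ) := Matrix.linftyOpNormedAlgebra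
  set Cc : Matrix N N ℂ := (algebraMap ℝ ℂ).mapMatrix C with hCc
  have hmem : ∀ μ ∈ spectrum ℂ Cc, ‖μ‖₊ < 1 := fun μ hμ => by
    have := hρ μ (by simpa [hCc, RingHom.mapMatrix_apply] using hμ)
    exact_mod_cast this
  have hrad : spectralRadius ℂ Cc < 1 := by
    simpa using spectrum.spectralRadius_lt_of_forall_lt Cc hmem
  have hgel := spectrum.pow_nnnorm_pow_one_div_tendsto_nhds_spectralRadius Cc
  obtain ⟨r, hr0, hr1⟩ : ∃ r : ℝ≥0, spectralRadius ℂ Cc < r ∧ (r : ℝ≥0∞) < 1 := by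
    obtain ⟨r, h1, h2⟩ := ENNReal.lt_iff_exists_nnreal_btwn.mp hrad
    exact ⟨r, h1, h2⟩
  have hev : ∀ᶠ t : ℕ in atTop, (‖Cc ^ t‖₊ : ℝ≥0∞) ^ (1 / (t : ℝ)) < (r : ℝ≥0∞) :=
    hgel.eventually_lt_const hr0
  have hev2 : ∀ᶠ t : ℕ in atTop, ‖C ^ t‖ ≤ (r : ℝ) ^ t := by
    filter_upwards [hev, eventually_ge_atTop 1] with t ht ht1
    have ht0 : (t : ℝ) ≠ 0 := by positivity
    have hx : (‖Cc ^ t‖₊ : ℝ≥0∞) < (r : ℝ≥0∞) ^ (t : ℝ) := by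
      calc (‖Cc ^ t‖₊ : ℝ≥0∞) = ((‖Cc ^ t‖₊ : ℝ≥0∞) ^ (1 / (t : ℝ))) ^ (t : ℝ) := by
            rw [← ENNReal.rpow_mul, one_div, inv_mul_cancel₀ ht0, ENNReal.rpow_one]
        _ < (r : ℝ≥0∞) ^ (t : ℝ) :=
            ENNReal.rpow_lt_rpow ht (by exact_mod_cast ht1)
    have hx' : ‖Cc ^ t‖₊ < r ^ t := by
      rw [← ENNReal.coe_rpow_of_nonneg r (by positivity), ENNReal.coe_lt_coe,
        NNReal.rpow_natCast] at hx
      exact hx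
    have heq : ‖Cc ^ t‖₊ = ‖C ^ t‖₊ := by
      rw [hCc, ← map_pow]
      exact nnnorm_mapMatrix_aux _
    calc ‖C ^ t‖ = (‖Cc ^ t‖₊ : ℝ) := by rw [heq]; rfl
      _ ≤ (r ^ t : ℝ≥0) := by exact_mod_cast hx'.le
      _ = (r : ℝ) ^ t := by push_cast; ring
  have hsum : Summable (fun t : ℕ => C ^ t) := by
    refine Summable.of_norm ?_
    refine summable_of_isBigO_nat (summable_geometric_of_lt_one r.coe_nonneg ?_) ?_
    · exact_mod_cast hr1
    · refine (hev2.mono fun t ht => ?_).isBigO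
      simpa using ht
  obtain ⟨S, hS⟩ := hsum
  have h1 : HasSum (fun t : ℕ => C ^ (t + 1)) (S - 1) := by
    refine (hasSum_nat_add_iff 1).mpr ?_
    simpa using hS
  have h2 : HasSum (fun t : ℕ => C ^ (t + 1)) (C * S) := by
    simpa [pow_succ'] using hS.mul_left C
  have h3 : C * S = S - 1 := h2.unique h1
  have hinv : (1 - C) * S = 1 := by
    rw [sub_mul, one_mul, h3]; exact sub_sub_cancel S 1
  refine ⟨S, Matrix.inv_eq_right_inv hinv, fun L => ?_⟩
  have := hS.mapL (LinearMap.toContinuousLinearMap L)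
  simpa using this

lemma dot_kron_vec {ι κ : Type*} [Fintype ι] [Fintype κ] (u w : ι → ℝ) (v z : κ → ℝ) :
    (fun q : ι × κ => u q.1 * v q.2) ⬝ᵥ (fun q : ι × κ => w q.1 * z q.2)
      = (u ⬝ᵥ w) * (v ⬝ᵥ z) := by
  simp only [dotProduct, Finset.sum_mul_sum, Fintype.sum_prod_type]
  exact Finset.sum_congr rfl fun i _ => Finset.sum_congr rfl fun j _ => by ring

lemma kron_mulVec {ι κ : Type*} [Fintype ι] [Fintype κ] (P : Matrix ι ι ℝ) (Q : Matrix κ κ ℝ)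
    (v₁ : ι → ℝ) (v₂ : κ → ℝ) :
    (P ⊗ₖ Q) *ᵥ (fun q : ι × κ => v₁ q.1 * v₂ q.2)
      = fun q : ι × κ => (P *ᵥ v₁) q.1 * (Q *ᵥ v₂) q.2 := by
  funext q
  exact dot_kron_vec (P q.1) v₁ (Q q.2) v₂

lemma prod_kron {Γ : Type*} {n m : ℕ} (A : Γ → Matrix (Fin n) (Fin n) ℝ)
    (B : Γ → Matrix (Fin m) (Fin m) ℝ) (x : List Γ) :
    ((x.map fun σ => A σ ⊗ₖ B σ).prod) = ((x.map A).prod) ⊗ₖ ((x.map B).prod) := by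
  induction x with
  | nil => simp [Matrix.one_kronecker_one]
  | cons σ x ih => simp [ih, Matrix.mul_kronecker_mul]

lemma sum_tuple {Γ : Type*} [Fintype Γ] {N : Type*} [Fintype N] [DecidableEq N]
    (D : Γ → Matrix N N ℝ) (t : ℕ) :
    ∑ v : Fin t → Γ, ((List.ofFn v).map D).prod = (∑ σ : Γ, D σ) ^ t := by
  induction t with
  | zero => simp
  | succ t ih =>
    rw [pow_succ', ← ih, Finset.sum_mul_sum]
    rw [← (Fin.consEquiv fun _ : Fin (t+1) => Γ).sum_comp]
    rw [Fintype.sum_prod_type]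
    refine Finset.sum_congr rfl fun σ _ => Finset.sum_congr rfl fun v _ => ?_
    simp [Fin.consEquiv, List.ofFn_succ, Fin.cons_zero, Fin.cons_succ]

def dotMulVecLin {N : Type*} [Fintype N] (u v : N → ℝ) : Matrix N N ℝ →ₗ[ℝ] ℝ where
  toFun M := u ⬝ᵥ M *ᵥ v
  map_add' M M' := by simp [Matrix.add_mulVec, dotProduct_add]
  map_smul' c M := by simp [Matrix.smul_mulVec, dotProduct_smul]

lemma summable_mul_of_sq {ι : Type*} {f g : ι → ℝ} (hf : Summable fun x => f x ^ 2)
    (hg : Summable fun x => g x ^ 2) : Summable fun x => f x * g x := by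
  refine Summable.of_abs ?_
  refine Summable.of_nonneg_of_le (fun x => abs_nonneg _) (fun x => ?_)
    (((hf.add hg).div_const 2))
  rw [abs_mul]
  nlinarith [sq_nonneg (|f x| - |g x|), sq_abs (f x), sq_abs (g x), abs_nonneg (f x),
    abs_nonneg (g x)]

end helpers

/-- The function realized by a weighted finite automaton `⟨α₀, α∞, {A_σ}⟩`. -/
noncomputable def wfaFun {Γ : Type*} {n : ℕ} (α₀ αinf : Fin n → ℝ)
    (A : Γ → Matrix (Fin n) (Fin n) ℝ) (x : List Γ) : ℝ :=
  α₀ ⬝ᵥ ((x.map A).prod).mulVec αinf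

/-- inner product of two `ℓ²` rational series via the resolvent of
the Kronecker-product transition matrix, assuming its spectral radius is `< 1`. -/
theorem inner_product_rational_series {Γ : Type*} [Fintype Γ] {n m : ℕ}
    (α₀ αinf : Fin n → ℝ) (A : Γ → Matrix (Fin n) (Fin n) ℝ)
    (β₀ βinf : Fin m → ℝ) (B : Γ → Matrix (Fin m) (Fin m) ℝ)
    (hA : Summable fun x : List Γ => (wfaFun α₀ αinf A x) ^ 2)
    (hB : Summable fun x : List Γ => (wfaFun β₀ βinf B x) ^ 2)
    (C : Matrix (Fin n × Fin m) (Fin n × Fin m) ℝ)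
    (hC : C = ∑ σ : Γ, (A σ) ⊗ₖ (B σ))
    (hρ : ∀ μ ∈ spectrum ℂ (C.map (algebraMap ℝ ℂ)), ‖μ‖ < 1) :
    HasSum (fun x : List Γ => wfaFun α₀ αinf A x * wfaFun β₀ βinf B x)
      ((fun q : Fin n × Fin m => α₀ q.1 * β₀ q.2) ⬝ᵥ
        ((1 - C)⁻¹).mulVec (fun q : Fin n × Fin m => αinf q.1 * βinf q.2)) := by
  classical
  rcases Nat.eq_zero_or_pos n with hn | hn
  · subst hn
    simpa [wfaFun, dotProduct] using (hasSum_zero : HasSum (fun _ : List Γ => (0 : ℝ)) 0)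
  rcases Nat.eq_zero_or_pos m with hm | hm
  · subst hm
    simpa [wfaFun, dotProduct] using (hasSum_zero : HasSum (fun _ : List Γ => (0 : ℝ)) 0)
  haveI : Nonempty (Fin n) := Fin.pos_iff_nonempty.mp hn
  haveI : Nonempty (Fin m) := Fin.pos_iff_nonempty.mp hm
  set γ₀ : Fin n × Fin m → ℝ := fun q => α₀ q.1 * β₀ q.2 with hγ₀
  set γinf : Fin n × Fin m → ℝ := fun q => αinf q.1 * βinf q.2 with hγinf
  set L : Matrix (Fin n × Fin m) (Fin n × Fin m) ℝ →ₗ[ℝ] ℝ := dotMulVecLin γ₀ γinf with hL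
  obtain ⟨F, hF⟩ : ∃ F : List Γ → ℝ,
      F = fun x => wfaFun α₀ αinf A x * wfaFun β₀ βinf B x := ⟨_, rfl⟩
  rw [show (fun x : List Γ => wfaFun α₀ αinf A x * wfaFun β₀ βinf B x) = F from hF.symm]
  have hword : ∀ x : List Γ, F x = L ((x.map fun σ => (A σ) ⊗ₖ (B σ)).prod) := by
    intro x
    rw [hF]
    show wfaFun α₀ αinf A x * wfaFun β₀ βinf B x
      = γ₀ ⬝ᵥ ((x.map fun σ => (A σ) ⊗ₖ (B σ)).prod) *ᵥ γinf
    rw [prod_kron, hγ₀, hγinf, kron_mulVec, dot_kron_vec]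
    rfl
  have hfg : Summable F := hF ▸ summable_mul_of_sq hA hB
  obtain ⟨S, hSinv, hLsum⟩ := geo_aux C hρ
  have hscal : HasSum (fun t : ℕ => L (C ^ t)) (L S) := hLsum L
  -- compute the tsum of F
  have key : ∑' x : List Γ, F x = L S := by
    have h1 : ∑' x : List Γ, F x
        = ∑' p : Σ t : ℕ, Fin t → Γ, F ((List.equivSigmaTuple (α := Γ)).symm p) :=
      ((List.equivSigmaTuple (α := Γ)).symm.tsum_eq F).symm
    have hsummable : Summable fun p : Σ t : ℕ, Fin t → Γ =>
        F ((List.equivSigmaTuple (α := Γ)).symm p) :=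
      ((List.equivSigmaTuple (α := Γ)).symm.summable_iff).mpr hfg
    have h2 : ∑' p : Σ t : ℕ, Fin t → Γ, F ((List.equivSigmaTuple (α := Γ)).symm p)
        = ∑' t : ℕ, ∑' v : Fin t → Γ, F ((List.equivSigmaTuple (α := Γ)).symm ⟨t, v⟩) :=
      Summable.tsum_sigma hsummable
    have h3 : ∀ t : ℕ, ∑' v : Fin t → Γ, F ((List.equivSigmaTuple (α := Γ)).symm ⟨t, v⟩)
        = L (C ^ t) := by
      intro t
      rw [tsum_fintype]
      have : ∀ v : Fin t → Γ, F ((List.equivSigmaTuple (α := Γ)).symm ⟨t, v⟩)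
          = L (((List.ofFn v).map fun σ => (A σ) ⊗ₖ (B σ)).prod) := fun v => hword _
      rw [Finset.sum_congr rfl fun v _ => this v, ← map_sum, sum_tuple, ← hC]
    rw [h1, h2]
    rw [tsum_congr h3]
    exact hscal.tsum_eq
  have hfinal : (fun q : Fin n × Fin m => α₀ q.1 * β₀ q.2) ⬝ᵥ
      ((1 - C)⁻¹).mulVec (fun q : Fin n × Fin m => αinf q.1 * βinf q.2) = L S := by
    rw [hL]
    show γ₀ ⬝ᵥ (1 - C)⁻¹ *ᵥ γinf = dotMulVecLin γ₀ γinf S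
    rw [hSinv]
    rfl
  rw [hfinal, ← key]
  exact hfg.hasSum
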